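/- arXiv:2312.16369 — 5 statements merged into one kernel-verified Lean document; each statement's English description precedes it below -/
import Mathlib

section
/- In any alternative algebra A over a field of characteristic 0, the operator D_{a,b} = [L_a, L_b] + [R_a, R_b] + [L_a, R_b] is a derivation of A for all a, b in A. -/
/-- The inner-derivation operator `D_{a,b} = [L_a, L_b] + [R_a, R_b] + [L_a, R_b]`. -/
def innerDeriv (k : Type*) {A : Type*} [CommRing k] [NonUnitalNonAssocRing A]
    [Module k A] [SMulCommClass k A A] [IsScalarTower k A A] (a b : A) :
    Module.End k A :=
  ⁅LinearMap.mulLeft k a, LinearMap.mulLeft k b⁆ +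
    ⁅LinearMap.mulRight k a, LinearMap.mulRight k b⁆ +
    ⁅LinearMap.mulLeft k a, LinearMap.mulRight k b⁆

/-- In any alternative algebra `A` over a field of characteristic `0`, the operator
`D_{a,b} = [L_a, L_b] + [R_a, R_b] + [L_a, R_b]` is a derivation of `A`. -/
theorem innerDeriv_is_derivation {k A : Type*} [Field k] [CharZero k]
    [NonUnitalNonAssocRing A] [Module k A] [SMulCommClass k A A] [IsScalarTower k A A]
    (halt₁ : ∀ x y : A, (x * x) * y = x * (x * y))
    (halt₂ : ∀ x y : A, (x * y) * y = x * (y * y))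
    (a b : A) :
    ∀ x y : A, innerDeriv k a b (x * y) =
      innerDeriv k a b x * y + x * innerDeriv k a b y := by
  have lin1 : ∀ p q r : A, (p * q) * r + (q * p) * r = p * (q * r) + q * (p * r) := by
    intro p q r
    have h := halt₁ (p + q) r
    have h1 := halt₁ p r
    have h2 := halt₁ q r
    simp only [add_mul, mul_add] at h
    linear_combination (norm := abel1) h - h1 - h2
  have lin2 : ∀ p q r : A, (p * q) * r + (p * r) * q = p * (q * r) + p * (r * q) := by
    intro p q r
    have h := halt₂ p (q + r)
    have h1 := halt₂ p q
    have h2 := halt₂ p r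
    simp only [add_mul, mul_add] at h
    linear_combination (norm := abel1) h - h1 - h2
  intro x y
  simp only [innerDeriv, Ring.lie_def, LinearMap.add_apply, LinearMap.sub_apply,
    Module.End.mul_apply, LinearMap.mulLeft_apply, LinearMap.mulRight_apply,
    add_mul, sub_mul, mul_add, mul_sub]
  refine smul_right_injective A (two_ne_zero (α := k)) ?_
  beta_reduce
  rw [show (2 : k) = ((2 : ℤ) : k) by norm_num, Int.cast_smul_eq_zsmul,
    Int.cast_smul_eq_zsmul]
  have h0 : ((a * b) * x) * y + ((b * a) * x) * y = (a * (b * x)) * y + (b * (a * x)) * y := by rw [← add_mul, lin1, add_mul]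
  have h1 : x * ((a * b) * y) + x * ((b * a) * y) = x * (a * (b * y)) + x * (b * (a * y)) := by rw [← mul_add, lin1, mul_add]
  have h2 : ((a * x) * b) * y + ((x * a) * b) * y = (a * (x * b)) * y + (x * (a * b)) * y := by rw [← add_mul, lin1, add_mul]
  have h3 : b * ((a * x) * y) + b * ((x * a) * y) = b * (a * (x * y)) + b * (x * (a * y)) := by rw [← mul_add, lin1, mul_add]
  have h4 : x * ((a * y) * b) + x * ((y * a) * b) = x * (a * (y * b)) + x * (y * (a * b)) := by rw [← mul_add, lin1, mul_add]
  have h5 : ((b * a) * x) * y + ((b * x) * a) * y = (b * (a * x)) * y + (b * (x * a)) * y := by rw [← add_mul, lin2, add_mul]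
  have h6 : x * ((b * a) * y) + x * ((b * y) * a) = x * (b * (a * y)) + x * (b * (y * a)) := by rw [← mul_add, lin2, mul_add]
  have h7 : ((b * x) * a) * y + ((x * b) * a) * y = (b * (x * a)) * y + (x * (b * a)) * y := by rw [← add_mul, lin1, add_mul]
  have h8 : a * ((b * x) * y) + a * ((x * b) * y) = a * (b * (x * y)) + a * (x * (b * y)) := by rw [← mul_add, lin1, mul_add]
  have h9 : x * ((b * y) * a) + x * ((y * b) * a) = x * (b * (y * a)) + x * (y * (b * a)) := by rw [← mul_add, lin1, mul_add]
  have h10 := lin1 (a * b) x y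
  have h11 := lin2 x (a * b) y
  have h12 := lin1 (a * x) b y
  have h13 := lin1 b x (a * y)
  have h14 := lin1 (b * a) x y
  have h15 := lin2 x (b * a) y
  have h16 := lin1 (b * x) a y
  have h17 := lin1 a x (b * y)
  have h18 := lin1 (x * a) b y
  have h19 := lin1 (x * b) a y
  have h20 := lin1 (x * y) a b
  have h21 := lin2 (x * y) a b
  have h22 := lin2 a (x * y) b
  have h23 := lin1 a b (x * y)
  linear_combination (norm := abel1) (-1 : ℤ) • h0 + (-1 : ℤ) • h1 + (-1 : ℤ) • h2 + (3 : ℤ) • h3 + (2 : ℤ) • h4 + (2 : ℤ) • h5 + (2 : ℤ) • h6 + (1 : ℤ) • h7 + (-3 : ℤ) • h8 + (-2 : ℤ) • h9 + (1 : ℤ) • h10 + (-2 : ℤ) • h11 + (3 : ℤ) • h12 + (-3 : ℤ) • h13 + (-1 : ℤ) • h14 + (2 : ℤ) • h15 + (-3 : ℤ) • h16 + (3 : ℤ) • h17 + (3 : ℤ) • h18 + (-3 : ℤ) • h19 + (-4 : ℤ) • h20 + (2 : ℤ) • h21 + (2 : ℤ) • h22 + (-1 : ℤ) • h23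
end

section
/- In any alternative algebra A over a field of characteristic 0, the inner derivation operators satisfy the cocycle identity D_{ab,c} + D_{bc,a} + D_{ca,b} = 0 for all a, b, c in A, where D_{x,y} = [L_x, L_y] + [R_x, R_y] + [L_x, R_y]. -/
/-- In any alternative algebra `A` over a field of characteristic `0`, the inner derivation
operators satisfy the cocycle identity `D_{ab,c} + D_{bc,a} + D_{ca,b} = 0`. -/
theorem innerDeriv_cocycle {k A : Type*} [Field k] [CharZero k]
    [NonUnitalNonAssocRing A] [Module k A] [SMulCommClass k A A] [IsScalarTower k A A]
    (halt₁ : ∀ x y : A, (x * x) * y = x * (x * y))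
    (halt₂ : ∀ x y : A, (x * y) * y = x * (y * y))
    (a b c : A) :
    innerDeriv k (a * b) c + innerDeriv k (b * c) a + innerDeriv k (c * a) b = 0 := by
  have hL : ∀ u v w : A, (u * v) * w + (v * u) * w = u * (v * w) + v * (u * w) := by
    intro u v w
    have h := halt₁ (u + v) w
    simp only [add_mul, mul_add, halt₁] at h
    rw [← sub_eq_zero] at h ⊢
    rw [← h]; abel
  have hR : ∀ u v w : A, (u * v) * w + (u * w) * v = u * (v * w) + u * (w * v) := by
    intro u v w
    have h := halt₂ u (v + w)
    simp only [add_mul, mul_add, halt₂] at h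
    rw [← sub_eq_zero] at h ⊢
    rw [← h]; abel
  have hzR : ∀ z u v w : A,
      z * ((u * v) * w) + z * ((u * w) * v) = z * (u * (v * w)) + z * (u * (w * v)) := by
    intro z u v w
    have h := congrArg (fun t => z * t) (hR u v w)
    simpa only [mul_add] using h
  have hLz : ∀ u v w z : A,
      ((u * v) * w) * z + ((v * u) * w) * z = (u * (v * w)) * z + (v * (u * w)) * z := by
    intro u v w z
    have h := congrArg (fun t => t * z) (hL u v w)
    simpa only [add_mul] using h
  have hRz : ∀ u v w z : A,
      ((u * v) * w) * z + ((u * w) * v) * z = (u * (v * w)) * z + (u * (w * v)) * z := by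
    intro u v w z
    have h := congrArg (fun t => t * z) (hR u v w)
    simpa only [add_mul] using h
  ext x
  simp only [innerDeriv, Ring.lie_def, LinearMap.add_apply, LinearMap.sub_apply,
    Module.End.mul_apply, LinearMap.mulLeft_apply, LinearMap.mulRight_apply,
    LinearMap.zero_apply]
  have E : (a * b * (c * x) - c * (a * b * x) + (x * c * (a * b) - x * (a * b) * c) + (a * b * (x * c) - a * b * x * c) +
        (b * c * (a * x) - a * (b * c * x) + (x * a * (b * c) - x * (b * c) * a) + (b * c * (x * a) - b * c * x * a)) +
      (c * a * (b * x) - b * (c * a * x) + (x * b * (c * a) - x * (c * a) * b) + (c * a * (x * b) - c * a * x * b))) =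
      -((((a * x) * b) * c + (b * (a * x)) * c) - ((a * x) * (b * c) + b * ((a * x) * c))) +
      ((((a * x) * b) * c + ((a * x) * c) * b) - ((a * x) * (b * c) + (a * x) * (c * b))) +
      (((b * (a * x)) * c + (b * c) * (a * x)) - (b * ((a * x) * c) + b * (c * (a * x)))) +
      -((((a * x) * c) * b + (c * (a * x)) * b) - ((a * x) * (c * b) + c * ((a * x) * b))) +
      -(((a * (b * x)) * c + (a * c) * (b * x)) - (a * ((b * x) * c) + a * (c * (b * x)))) +
      (((a * c) * (b * x) + (c * a) * (b * x)) - (a * (c * (b * x)) + c * (a * (b * x)))) +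
      -((((c * x) * a) * b + (a * (c * x)) * b) - ((c * x) * (a * b) + a * ((c * x) * b))) +
      ((((c * x) * a) * b + ((c * x) * b) * a) - ((c * x) * (a * b) + (c * x) * (b * a))) +
      (((a * (c * x)) * b + (a * b) * (c * x)) - (a * ((c * x) * b) + a * (b * (c * x)))) +
      -((((c * x) * b) * a + (b * (c * x)) * a) - ((c * x) * (b * a) + b * ((c * x) * a))) +
      -((((x * a) * b) * c + (b * (x * a)) * c) - ((x * a) * (b * c) + b * ((x * a) * c))) +
      (((b * (x * a)) * c + (b * c) * (x * a)) - (b * ((x * a) * c) + b * (c * (x * a)))) +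
      ((((x * b) * a) * c + (a * (x * b)) * c) - ((x * b) * (a * c) + a * ((x * b) * c))) +
      -((((x * b) * a) * c + ((x * b) * c) * a) - ((x * b) * (a * c) + (x * b) * (c * a))) +
      -(((a * (x * b)) * c + (a * c) * (x * b)) - (a * ((x * b) * c) + a * (c * (x * b)))) +
      (((a * c) * (x * b) + (c * a) * (x * b)) - (a * (c * (x * b)) + c * (a * (x * b)))) +
      -((((x * c) * a) * b + (a * (x * c)) * b) - ((x * c) * (a * b) + a * ((x * c) * b))) +
      (((a * (x * c)) * b + (a * b) * (x * c)) - (a * ((x * c) * b) + a * (b * (x * c)))) +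
      -((a * ((b * c) * x) + a * ((b * x) * c)) - (a * (b * (c * x)) + a * (b * (x * c)))) +
      -((((b * c) * x) * a + ((b * x) * c) * a) - ((b * (c * x)) * a + (b * (x * c)) * a)) +
      ((((b * x) * c) * a + ((x * b) * c) * a) - ((b * (x * c)) * a + (x * (b * c)) * a)) +
      -((b * ((c * a) * x) + b * ((c * x) * a)) - (b * (c * (a * x)) + b * (c * (x * a)))) +
      -((((c * a) * x) * b + ((c * x) * a) * b) - ((c * (a * x)) * b + (c * (x * a)) * b)) +
      ((((c * x) * a) * b + ((x * c) * a) * b) - ((c * (x * a)) * b + (x * (c * a)) * b)) +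
      -((c * ((a * b) * x) + c * ((a * x) * b)) - (c * (a * (b * x)) + c * (a * (x * b)))) +
      -((((a * b) * x) * c + ((a * x) * b) * c) - ((a * (b * x)) * c + (a * (x * b)) * c)) +
      ((((a * x) * b) * c + ((x * a) * b) * c) - ((a * (x * b)) * c + (x * (a * b)) * c)) := by
    abel
  rw [E, sub_eq_zero_of_eq (hL (a * x) b c),
    sub_eq_zero_of_eq (hR (a * x) b c),
    sub_eq_zero_of_eq (hR b (a * x) c),
    sub_eq_zero_of_eq (hL (a * x) c b),
    sub_eq_zero_of_eq (hR a (b * x) c),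
    sub_eq_zero_of_eq (hL a c (b * x)),
    sub_eq_zero_of_eq (hL (c * x) a b),
    sub_eq_zero_of_eq (hR (c * x) a b),
    sub_eq_zero_of_eq (hR a (c * x) b),
    sub_eq_zero_of_eq (hL (c * x) b a),
    sub_eq_zero_of_eq (hL (x * a) b c),
    sub_eq_zero_of_eq (hR b (x * a) c),
    sub_eq_zero_of_eq (hL (x * b) a c),
    sub_eq_zero_of_eq (hR (x * b) a c),
    sub_eq_zero_of_eq (hR a (x * b) c),
    sub_eq_zero_of_eq (hL a c (x * b)),
    sub_eq_zero_of_eq (hL (x * c) a b),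
    sub_eq_zero_of_eq (hR a (x * c) b),
    sub_eq_zero_of_eq (hzR a b c x),
    sub_eq_zero_of_eq (hRz b c x a),
    sub_eq_zero_of_eq (hLz b x c a),
    sub_eq_zero_of_eq (hzR b c a x),
    sub_eq_zero_of_eq (hRz c a x b),
    sub_eq_zero_of_eq (hLz c x a b),
    sub_eq_zero_of_eq (hzR c a b x),
    sub_eq_zero_of_eq (hRz a b x c),
    sub_eq_zero_of_eq (hLz a x b c)]
  simp
end

section
/- In any alternative algebra A over a field of characteristic 0, for every derivation D of A and all a, b in A, one has [D, D_{a,b}] = D_{D(a),b} + D_{a,D(b)}, where D_{x,y} = [L_x, L_y] + [R_x, R_y] + [L_x, R_y]. Consequently, the span of all D_{a,b} is an ideal of the Lie algebra of derivations of A. -/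
lemma lie_mulLeft {k A : Type*} [CommRing k]
    [NonUnitalNonAssocRing A] [Module k A] [SMulCommClass k A A] [IsScalarTower k A A]
    (D : Module.End k A) (hD : ∀ x y : A, D (x * y) = D x * y + x * D y) (a : A) :
    ⁅D, LinearMap.mulLeft k a⁆ = LinearMap.mulLeft k (D a) := by
  ext x
  simp [Ring.lie_def, hD, LinearMap.mulLeft_apply]

lemma lie_mulRight {k A : Type*} [CommRing k]
    [NonUnitalNonAssocRing A] [Module k A] [SMulCommClass k A A] [IsScalarTower k A A]
    (D : Module.End k A) (hD : ∀ x y : A, D (x * y) = D x * y + x * D y) (a : A) :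
    ⁅D, LinearMap.mulRight k a⁆ = LinearMap.mulRight k (D a) := by
  ext x
  simp [Ring.lie_def, hD, LinearMap.mulRight_apply]

lemma lie_innerDeriv {k A : Type*} [CommRing k]
    [NonUnitalNonAssocRing A] [Module k A] [SMulCommClass k A A] [IsScalarTower k A A]
    (D : Module.End k A) (hD : ∀ x y : A, D (x * y) = D x * y + x * D y) (a b : A) :
    ⁅D, innerDeriv k a b⁆ = innerDeriv k (D a) b + innerDeriv k a (D b) := by
  simp only [innerDeriv, lie_add]
  rw [← lie_mulLeft D hD a, ← lie_mulRight D hD a, ← lie_mulLeft D hD b, ← lie_mulRight D hD b]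
  simp only [Ring.lie_def]
  noncomm_ring

/-- In any alternative algebra `A` over a field of characteristic `0`, for every derivation
`D` of `A` one has `[D, D_{a,b}] = D_{D(a),b} + D_{a,D(b)}`; consequently the span of all
`D_{a,b}` is an ideal of the Lie algebra of derivations of `A`:  the bracket of any
derivation with any element of the span again lies in the span. -/
theorem innerDeriv_lie_deriv {k A : Type*} [Field k] [CharZero k]
    [NonUnitalNonAssocRing A] [Module k A] [SMulCommClass k A A] [IsScalarTower k A A]
    (halt₁ : ∀ x y : A, (x * x) * y = x * (x * y))
    (halt₂ : ∀ x y : A, (x * y) * y = x * (y * y)) :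
    (∀ D : Module.End k A, (∀ x y : A, D (x * y) = D x * y + x * D y) →
      ∀ a b : A, ⁅D, innerDeriv k a b⁆ = innerDeriv k (D a) b + innerDeriv k a (D b)) ∧
    (∀ D : Module.End k A, (∀ x y : A, D (x * y) = D x * y + x * D y) →
      ∀ T ∈ Submodule.span k {T : Module.End k A | ∃ a b : A, T = innerDeriv k a b},
        ⁅D, T⁆ ∈ Submodule.span k {T : Module.End k A | ∃ a b : A, T = innerDeriv k a b}) := by
  refine ⟨fun D hD => lie_innerDeriv D hD, fun D hD T hT => ?_⟩
  induction hT using Submodule.span_induction with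
  | mem T hT =>
    obtain ⟨a, b, rfl⟩ := hT
    rw [lie_innerDeriv D hD]
    exact add_mem (Submodule.subset_span ⟨D a, b, rfl⟩) (Submodule.subset_span ⟨a, D b, rfl⟩)
  | zero => rw [Ring.lie_def, mul_zero, zero_mul, sub_zero]; exact zero_mem _
  | add x y _ _ hx hy => rw [Ring.lie_def, mul_add, add_mul, add_sub_add_comm, ← Ring.lie_def, ← Ring.lie_def]; exact add_mem hx hy
  | smul c x _ hx => rw [Ring.lie_def, mul_smul_comm, smul_mul_assoc, ← smul_sub, ← Ring.lie_def]; exact Submodule.smul_mem _ c hx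
end

section
/- In any alternative algebra A, D_{a,b} = L_{[a,b]} - R_{[a,b]} - 3[L_a, R_b] for all a, b in A, where D_{a,b} = [L_a, L_b] + [R_a, R_b] + [L_a, R_b] and [a,b] = ab - ba. -/
/-- Linearization of the left alternative law. -/
lemma lin_alt₁ {A : Type*} [NonUnitalNonAssocRing A]
    (halt₁ : ∀ x y : A, (x * x) * y = x * (x * y)) (x y z : A) :
    (x * y) * z + (y * x) * z = x * (y * z) + y * (x * z) := by
  have h := halt₁ (x + y) z
  simp only [add_mul, mul_add] at h
  rw [halt₁ x z, halt₁ y z] at h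
  linear_combination (norm := abel1) h

/-- Linearization of the right alternative law. -/
lemma lin_alt₂ {A : Type*} [NonUnitalNonAssocRing A]
    (halt₂ : ∀ x y : A, (x * y) * y = x * (y * y)) (x y z : A) :
    (x * y) * z + (x * z) * y = x * (y * z) + x * (z * y) := by
  have h := halt₂ x (y + z)
  simp only [add_mul, mul_add] at h
  rw [halt₂ x y, halt₂ x z] at h
  linear_combination (norm := abel1) h

/-- In any alternative algebra `A`,
`D_{a,b} = L_{[a,b]} - R_{[a,b]} - 3 [L_a, R_b]`, where `[a,b] = ab - ba`. -/
theorem innerDeriv_eq {k A : Type*} [Field k] [CharZero k]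
    [NonUnitalNonAssocRing A] [Module k A] [SMulCommClass k A A] [IsScalarTower k A A]
    (halt₁ : ∀ x y : A, (x * x) * y = x * (x * y))
    (halt₂ : ∀ x y : A, (x * y) * y = x * (y * y))
    (a b : A) :
    innerDeriv k a b =
      LinearMap.mulLeft k (a * b - b * a) - LinearMap.mulRight k (a * b - b * a) -
        3 • ⁅LinearMap.mulLeft k a, LinearMap.mulRight k b⁆ := by
  ext x
  simp only [innerDeriv, Ring.lie_def, LinearMap.sub_apply, LinearMap.add_apply,
    Module.End.mul_apply, LinearMap.smul_apply, LinearMap.mulLeft_apply,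
    LinearMap.mulRight_apply, sub_mul, mul_sub, smul_sub]
  have H1 := lin_alt₁ halt₁ a b x
  have H2 := lin_alt₂ halt₂ a x b
  have H3 := lin_alt₁ halt₁ x a b
  have H4 := lin_alt₂ halt₂ x b a
  linear_combination (norm := abel1) H1 - H2 - H2 - H3 - H3 + H4
end

section
/- Let W be the Weyl group of the affine Kac–Moody algebra of type A2^(1), ρ a weight with ρ(αᵢ∨) = 1 for i = 0,1,2, and δ the basic imaginary root. Then for w, w' in W with w ≠ w', the weights w(ρ) - ρ and w'(ρ) - ρ are not congruent modulo ℤδ. -/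
section A2affine

variable (k : Type*) [Field k] [CharZero k]

/-- The dual `ĥ*` of the extended Cartan subalgebra of affine `A₂⁽¹⁾`, with coordinates
recording the values on `α₀∨, α₁∨, α₂∨, d`. -/
abbrev Vaff := Fin 4 → k

/-- The simple roots `α₀, α₁, α₂` of affine type `A₂⁽¹⁾`, as elements of `ĥ*`
(`αᵢ(αⱼ∨)` is the affine Cartan matrix and `αᵢ(d) = δ_{i0}`). -/
def affRoot : Fin 3 → Vaff k
  | 0 => ![2, -1, -1, 1]
  | 1 => ![-1, 2, -1, 0]
  | 2 => ![-1, -1, 2, 0]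

/-- The simple reflections `rᵢ(λ) = λ - λ(αᵢ∨) αᵢ`. -/
def affRefl (i : Fin 3) : Vaff k ≃ₗ[k] Vaff k :=
  Module.reflection (x := affRoot k i) (f := LinearMap.proj i.castSucc)
    (by fin_cases i <;> simp [affRoot, LinearMap.proj, Fin.castSucc, Fin.castAdd, Fin.castLE])

/-- The affine Weyl group of type `A₂⁽¹⁾`, generated by the three simple reflections. -/
def affWeylGroup : Subgroup (Vaff k ≃ₗ[k] Vaff k) :=
  Subgroup.closure (Set.range (affRefl k))

/-- The Weyl vector `ρ`, normalized by `ρ(αᵢ∨) = 1` for `i = 0,1,2` (and `ρ(d) = 0`). -/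
def affRho : Vaff k := ![1, 1, 1, 0]

/-- The basic imaginary root `δ = α₀ + α₁ + α₂`. -/
def affDelta : Vaff k := affRoot k 0 + affRoot k 1 + affRoot k 2

/-! ### Auxiliary machinery -/

/-- A (3× the) standard invariant bilinear form on `ĥ*`. -/
def BB (l m : Vaff k) : k :=
  -2*l 0*m 0 - 2*l 0*m 1 - 2*l 0*m 2 + 3*l 0*m 3
  - 2*l 1*m 0 - l 1*m 2 + 3*l 1*m 3
  - 2*l 2*m 0 - l 2*m 1 + 3*l 2*m 3
  + 3*l 3*m 0 + 3*l 3*m 1 + 3*l 3*m 2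

/-- The level (value on the canonical central element). -/
def ll (l : Vaff k) : k := l 0 + l 1 + l 2

/-- The six matrices of the finite Weyl group `S₃` acting on the coordinates `(λ₁, λ₂)`. -/
def Az : Fin 6 → Fin 2 → Fin 2 → ℤ :=
  ![![![1,0],![0,1]], ![![-1,0],![1,1]], ![![1,1],![0,-1]],
    ![![-1,-1],![1,0]], ![![0,1],![-1,-1]], ![![0,-1],![-1,0]]]

/-- Multiplication table for the six matrices. -/
def mulIdx : Fin 6 → Fin 6 → Fin 6 :=
  ![![0,1,2,3,4,5],![1,0,3,2,5,4],![2,4,0,5,1,3],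
    ![3,5,1,4,0,2],![4,2,5,0,3,1],![5,3,4,1,2,0]]

lemma Az_mul : ∀ (i j : Fin 6) (a b : Fin 2),
    Az (mulIdx i j) a b = Az i a 0 * Az j 0 b + Az i a 1 * Az j 1 b := by decide

lemma Az_rowsum : ∀ i : Fin 6, 3 ∣ (Az i 0 0 + Az i 0 1 - Az i 1 0 - Az i 1 1) := by decide

/-- The key invariant satisfied by all elements of the affine Weyl group. -/
def affP (u : Vaff k ≃ₗ[k] Vaff k) : Prop :=
  (∀ l m : Vaff k, BB k (u l) (u m) = BB k l m) ∧
  (u (affDelta k) = affDelta k) ∧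
  ∃ (i : Fin 6) (t1 t2 : ℤ), 3 ∣ (t1 - t2) ∧
    ∀ l : Vaff k,
      u l 1 = (Az i 0 0 : k) * l 1 + (Az i 0 1 : k) * l 2 + (t1 : k) * ll k l ∧
      u l 2 = (Az i 1 0 : k) * l 1 + (Az i 1 1 : k) * l 2 + (t2 : k) * ll k l

lemma affDelta_eq : affDelta k = ![0, 0, 0, 1] := by
  funext m
  fin_cases m <;> simp [affDelta, affRoot] <;> norm_num

lemma BB_delta (x : Vaff k) : BB k x (affDelta k) = 3 * ll k x := by
  rw [affDelta_eq]
  simp [BB, ll]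
  ring

lemma ll_of_inv (u : Vaff k ≃ₗ[k] Vaff k)
    (hB : ∀ l m : Vaff k, BB k (u l) (u m) = BB k l m)
    (hd : u (affDelta k) = affDelta k) (l : Vaff k) : ll k (u l) = ll k l := by
  have h := hB l (affDelta k)
  rw [hd, BB_delta, BB_delta] at h
  exact mul_left_cancel₀ (three_ne_zero) h

lemma affRefl_apply (i : Fin 3) (l : Vaff k) (m : Fin 4) :
    affRefl k i l m = l m - l i.castSucc * affRoot k i m := by
  rw [affRefl, Module.reflection_apply]
  simp [LinearMap.proj_apply]

lemma Az0_val : Az 0 = ![![1,0],![0,1]] := by decide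
lemma Az1_val : Az 1 = ![![-1,0],![1,1]] := by decide
lemma Az2_val : Az 2 = ![![1,1],![0,-1]] := by decide
lemma Az5_val : Az 5 = ![![0,-1],![-1,0]] := by decide

lemma affP_refl (i : Fin 3) : affP k (affRefl k i) := by
  have c0 : ((0 : Fin 3)).castSucc = (0 : Fin 4) := rfl
  have c1 : ((1 : Fin 3)).castSucc = (1 : Fin 4) := rfl
  have c2 : ((2 : Fin 3)).castSucc = (2 : Fin 4) := rfl
  fin_cases i
  · show affP k (affRefl k 0)
    refine ⟨fun l m => ?_, ?_, 5, 1, 1, by decide, fun l => ?_⟩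
    · simp only [BB, affRefl_apply, affRoot, c0, Matrix.cons_val]
      norm_num
      try ring
    · funext m
      rw [affRefl_apply, affDelta_eq]
      fin_cases m <;> simp [affRoot, c0] <;> norm_num
    · constructor <;>
      · rw [affRefl_apply]
        simp [affRoot, ll, Az5_val, c0]
        try ring
  · show affP k (affRefl k 1)
    refine ⟨fun l m => ?_, ?_, 1, 0, 0, by decide, fun l => ?_⟩
    · simp only [BB, affRefl_apply, affRoot, c1, Matrix.cons_val]
      norm_num
      try ring
    · funext m
      rw [affRefl_apply, affDelta_eq]
      fin_cases m <;> simp [affRoot, c1] <;> norm_num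
    · constructor <;>
      · rw [affRefl_apply]
        simp [affRoot, ll, Az1_val, c1]
        try ring
  · show affP k (affRefl k 2)
    refine ⟨fun l m => ?_, ?_, 2, 0, 0, by decide, fun l => ?_⟩
    · simp only [BB, affRefl_apply, affRoot, c2, Matrix.cons_val]
      norm_num
      try ring
    · funext m
      rw [affRefl_apply, affDelta_eq]
      fin_cases m <;> simp [affRoot, c2] <;> norm_num
    · constructor <;>
      · rw [affRefl_apply]
        simp [affRoot, ll, Az2_val, c2]
        try ring

lemma affP_one : affP k 1 := by
  refine ⟨fun l m => rfl, rfl, 0, 0, 0, by decide, fun l => ?_⟩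
  constructor <;> simp [Az0_val, ll] <;> ring

lemma affP_mul (u v : Vaff k ≃ₗ[k] Vaff k) (hu : affP k u) (hv : affP k v) :
    affP k (u * v) := by
  obtain ⟨hBu, hdu, i, a1, a2, hta, hru⟩ := hu
  obtain ⟨hBv, hdv, j, b1, b2, htb, hrv⟩ := hv
  have hmul : ∀ l : Vaff k, (u * v) l = u (v l) := fun l => rfl
  refine ⟨fun l m => ?_, ?_, mulIdx i j,
    Az i 0 0 * b1 + Az i 0 1 * b2 + a1, Az i 1 0 * b1 + Az i 1 1 * b2 + a2, ?_, fun l => ?_⟩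
  · rw [hmul, hmul, hBu, hBv]
  · rw [hmul, hdv, hdu]
  · obtain ⟨p, hp⟩ := htb
    obtain ⟨q, hq⟩ := Az_rowsum i
    obtain ⟨r, hr⟩ := hta
    exact ⟨q * b2 + (Az i 0 0 - Az i 1 0) * p + r, by linear_combination b2 * hq + (Az i 0 0 - Az i 1 0) * hp + hr⟩
  · have hll : ll k (v l) = ll k l := ll_of_inv k v hBv hdv l
    have h1 := (hru (v l)).1
    have h2 := (hru (v l)).2
    have g1 := (hrv l).1
    have g2 := (hrv l).2
    constructor
    · rw [hmul, h1, g1, g2, hll, Az_mul i j 0 0, Az_mul i j 0 1]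
      push_cast
      ring
    · rw [hmul, h2, g1, g2, hll, Az_mul i j 1 0, Az_mul i j 1 1]
      push_cast
      ring

lemma affRefl_inv (i : Fin 3) : (affRefl k i)⁻¹ = affRefl k i := by
  show (affRefl k i).symm = affRefl k i
  exact Module.reflection_symm _

lemma affP_of_mem (u : Vaff k ≃ₗ[k] Vaff k) (hu : u ∈ affWeylGroup k) : affP k u := by
  have hS : (Set.range (affRefl k))⁻¹ = Set.range (affRefl k) := by
    ext x
    simp only [Set.mem_inv, Set.mem_range]
    constructor
    · rintro ⟨i, hi⟩
      exact ⟨i, by rw [← affRefl_inv k i, hi, inv_inv]⟩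
    · rintro ⟨i, rfl⟩
      exact ⟨i, affRefl_inv k i⟩
  have h1 : u ∈ Submonoid.closure
      (Set.range (affRefl k) ∪ (Set.range (affRefl k))⁻¹) := by
    rw [← Subgroup.closure_toSubmonoid]
    exact hu
  rw [hS, Set.union_self] at h1
  exact Submonoid.closure_induction (motive := fun x _ => affP k x)
    (fun x hx => by obtain ⟨i, rfl⟩ := hx; exact affP_refl k i)
    (affP_one k)
    (fun x y _ _ hx hy => affP_mul k x y hx hy) h1

def sumProp (x1 x2 : ℤ) : Prop :=
  (x1 = 1 ∧ x2 = 1) ∨ (x1 = -1 ∧ x2 = 2) ∨ (x1 = 2 ∧ x2 = -1) ∨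
  (x1 = -2 ∧ x2 = 1) ∨ (x1 = 1 ∧ x2 = -2) ∨ (x1 = -1 ∧ x2 = -1)

lemma Az_sum_mem : ∀ i : Fin 6,
    sumProp (Az i 0 0 + Az i 0 1) (Az i 1 0 + Az i 1 1) := by
  unfold sumProp
  decide

lemma Az_sum_inj : ∀ i j : Fin 6, Az i 0 0 + Az i 0 1 = Az j 0 0 + Az j 0 1 →
    Az i 1 0 + Az i 1 1 = Az j 1 0 + Az j 1 1 → i = j := by decide

lemma uniq' : ∀ (x1 x2 y1 y2 t1 t2 s1 s2 : ℤ),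
    sumProp x1 x2 → sumProp y1 y2 → 3 ∣ (t1 - t2) → 3 ∣ (s1 - s2) →
    x1 + 3*t1 = y1 + 3*s1 → x2 + 3*t2 = y2 + 3*s2 →
    x1 = y1 ∧ x2 = y2 ∧ t1 = s1 ∧ t2 = s2 := by
  intro x1 x2 y1 y2 t1 t2 s1 s2 h1 h2
  unfold sumProp at h1 h2
  rcases h1 with ⟨rfl,rfl⟩|⟨rfl,rfl⟩|⟨rfl,rfl⟩|⟨rfl,rfl⟩|⟨rfl,rfl⟩|⟨rfl,rfl⟩ <;>
  rcases h2 with ⟨rfl,rfl⟩|⟨rfl,rfl⟩|⟨rfl,rfl⟩|⟨rfl,rfl⟩|⟨rfl,rfl⟩|⟨rfl,rfl⟩ <;> omega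

lemma uniq : ∀ (i j : Fin 6) (t1 t2 s1 s2 : ℤ), 3 ∣ (t1 - t2) → 3 ∣ (s1 - s2) →
    Az i 0 0 + Az i 0 1 + 3*t1 = Az j 0 0 + Az j 0 1 + 3*s1 →
    Az i 1 0 + Az i 1 1 + 3*t2 = Az j 1 0 + Az j 1 1 + 3*s2 →
    i = j ∧ t1 = s1 ∧ t2 = s2 := by
  intro i j t1 t2 s1 s2 ht hs h1 h2
  obtain ⟨e1, e2, e3, e4⟩ := uniq' _ _ _ _ t1 t2 s1 s2 (Az_sum_mem i) (Az_sum_mem j) ht hs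
    (by omega) (by omega)
  exact ⟨Az_sum_inj i j e1 e2, e3, e4⟩

lemma affRho_vals : affRho k 0 = 1 ∧ affRho k 1 = 1 ∧ affRho k 2 = 1 ∧ affRho k 3 = 0 := by
  refine ⟨rfl, rfl, rfl, rfl⟩

lemma ll_rho : ll k (affRho k) = 3 := by
  simp [ll, affRho]
  norm_num

lemma BB_add_delta (x : Vaff k) (c : k) :
    BB k (x + c • affDelta k) (x + c • affDelta k) = BB k x x + 6 * c * ll k x := by
  rw [affDelta_eq]
  simp [BB, ll]
  ring

/-- For the affine Weyl group `W` of type `A₂⁽¹⁾`: if `w ≠ w'` in `W`, then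
`w(ρ) - ρ` and `w'(ρ) - ρ` are not congruent modulo `ℤδ`. -/
theorem affWeyl_rho_not_congruent_mod_delta
    (w w' : Vaff k ≃ₗ[k] Vaff k) (hw : w ∈ affWeylGroup k) (hw' : w' ∈ affWeylGroup k)
    (hne : w ≠ w') (n : ℤ) :
    (w (affRho k) - affRho k) - (w' (affRho k) - affRho k) ≠ n • affDelta k := by
  intro hEq
  obtain ⟨hBw, hdw, i, t1, t2, ht, hrw⟩ := affP_of_mem k w hw
  obtain ⟨hBw', hdw', j, s1, s2, hs, hrw'⟩ := affP_of_mem k w' hw'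
  -- rearrange the hypothesis
  have hsub : w (affRho k) - w' (affRho k) = n • affDelta k := by
    rw [← hEq, sub_sub_sub_cancel_right]
  have hzs : (n : ℤ) • affDelta k = ((n : k)) • affDelta k := by
    rw [Int.cast_smul_eq_zsmul]
  have hmain : w (affRho k) = w' (affRho k) + (n : k) • affDelta k := by
    rw [← hzs]
    rw [eq_add_of_sub_eq hsub]
    exact add_comm _ _
  -- n = 0 using the invariant form
  have hB1 : BB k (w (affRho k)) (w (affRho k)) = BB k (affRho k) (affRho k) := hBw _ _
  have hB2 : BB k (w' (affRho k)) (w' (affRho k)) = BB k (affRho k) (affRho k) := hBw' _ _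
  have hllw' : ll k (w' (affRho k)) = 3 := by
    rw [ll_of_inv k w' hBw' hdw', ll_rho]
  have hn0 : (n : k) = 0 := by
    have := hB1
    rw [hmain, BB_add_delta, hB2, hllw'] at this
    have h18 : (n : k) * 18 = 0 := by linear_combination this
    rcases mul_eq_zero.mp h18 with h | h
    · exact h
    · exact absurd h (by norm_num)
  have hrho : w (affRho k) = w' (affRho k) := by
    rw [hmain, hn0, zero_smul, add_zero]
  -- extract the integer data at ρ
  have hrw1 := (hrw (affRho k)).1
  have hrw2 := (hrw (affRho k)).2
  have hrw'1 := (hrw' (affRho k)).1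
  have hrw'2 := (hrw' (affRho k)).2
  obtain ⟨hv0, hv1, hv2, hv3⟩ := affRho_vals k
  rw [hv1, hv2, ll_rho] at hrw1 hrw2 hrw'1 hrw'2
  have he1 : (Az i 0 0 + Az i 0 1 + 3 * t1 : ℤ) = (Az j 0 0 + Az j 0 1 + 3 * s1 : ℤ) := by
    have : ((Az i 0 0 + Az i 0 1 + 3 * t1 : ℤ) : k)
        = ((Az j 0 0 + Az j 0 1 + 3 * s1 : ℤ) : k) := by
      push_cast
      rw [← hrho] at hrw'1
      linear_combination hrw'1 - hrw1
    exact_mod_cast this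
  have he2 : (Az i 1 0 + Az i 1 1 + 3 * t2 : ℤ) = (Az j 1 0 + Az j 1 1 + 3 * s2 : ℤ) := by
    have : ((Az i 1 0 + Az i 1 1 + 3 * t2 : ℤ) : k)
        = ((Az j 1 0 + Az j 1 1 + 3 * s2 : ℤ) : k) := by
      push_cast
      rw [← hrho] at hrw'2
      linear_combination hrw'2 - hrw2
    exact_mod_cast this
  obtain ⟨rfl, rfl, rfl⟩ := uniq i j t1 t2 s1 s2 ht hs he1 he2
  -- now w and w' agree on coordinates 1, 2 everywhere
  have hc1 : ∀ l : Vaff k, w l 1 = w' l 1 := fun l => by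
    rw [(hrw l).1, (hrw' l).1]
  have hc2 : ∀ l : Vaff k, w l 2 = w' l 2 := fun l => by
    rw [(hrw l).2, (hrw' l).2]
  have hc0 : ∀ l : Vaff k, w l 0 = w' l 0 := fun l => by
    have h1 : ll k (w l) = ll k l := ll_of_inv k w hBw hdw l
    have h2 : ll k (w' l) = ll k l := ll_of_inv k w' hBw' hdw' l
    simp only [ll] at h1 h2
    linear_combination h1 - h2 - hc1 l - hc2 l
  have hc3 : ∀ l : Vaff k, w l 3 = w' l 3 := fun l => by
    have hE : BB k (w l) (w' (affRho k)) = BB k (w' l) (w' (affRho k)) := by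
      have e1 : BB k (w l) (w (affRho k)) = BB k l (affRho k) := hBw _ _
      have e2 : BB k (w' l) (w' (affRho k)) = BB k l (affRho k) := hBw' _ _
      rw [hrho] at e1
      rw [e1, e2]
    have hsum : w' (affRho k) 0 + w' (affRho k) 1 + w' (affRho k) 2 = 3 := hllw'
    simp only [BB] at hE
    rw [hc0 l, hc1 l, hc2 l] at hE
    linear_combination (1/9 : k) * hE - (1/3 : k) * (w l 3 - w' l 3) * hsum
  have : w = w' := by
    apply LinearEquiv.ext
    intro l
    funext m
    fin_cases m
    · exact hc0 l
    · exact hc1 l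
    · exact hc2 l
    · exact hc3 l
  exact hne this

end A2affine
end
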